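/- Let (X,p) be a TVS-cone metric space over E with cone P, and fix e ∈ int P. Then d_p = ξ_e ∘ p is a metric on X: for all x, y, z ∈ X one has d_p(x,y) ≥ 0; d_p(x,y) = 0 if and only if x = y; d_p(x,y) = d_p(y,x); and d_p(x,y) ≤ d_p(x,z) + d_p(z,y). -/

import Mathlib

open Filter Topology

section Defs

variable {E : Type*} [AddCommGroup E] [Module ℝ E] [TopologicalSpace E]

/-- `P` is a closed, pointed convex cone with nonempty interior in the TVS `E`. -/
structure IsTVSCone (P : Set E) : Prop where
  add_mem : ∀ ⦃a⦄, a ∈ P → ∀ ⦃b⦄, b ∈ P → a + b ∈ P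
  smul_mem : ∀ (r : ℝ), 0 ≤ r → ∀ ⦃a⦄, a ∈ P → r • a ∈ P
  pointed : ∀ a, a ∈ P → -a ∈ P → a = 0
  isClosed : IsClosed P
  int_nonempty : (interior P).Nonempty

/-- `a ≤ b` with respect to the cone `P`. -/
def ConeLe (P : Set E) (a b : E) : Prop := b - a ∈ P

/-- `a ≪ b` with respect to the cone `P`. -/
def ConeLt (P : Set E) (a b : E) : Prop := b - a ∈ interior P

/-- `p : X × X → E` is a TVS-cone metric over the cone `P`. -/
structure IsConeMetric (P : Set E) {X : Type*} (p : X → X → E) : Prop where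
  nonneg : ∀ x y, ConeLe P 0 (p x y)
  eq_zero_iff : ∀ x y, p x y = 0 ↔ x = y
  symm : ∀ x y, p x y = p y x
  triangle : ∀ x y z, ConeLe P (p x y) (p x z + p z y)

/-- The sequence `x` cone-converges to `a`. -/
def ConeConverges (P : Set E) {X : Type*} (p : X → X → E) (x : ℕ → X) (a : X) : Prop :=
  ∀ c, c ∈ interior P → ∃ N, ∀ n ≥ N, ConeLt P (p (x n) a) c

/-- The sequence `x` is cone-Cauchy. -/
def ConeCauchy (P : Set E) {X : Type*} (p : X → X → E) (x : ℕ → X) : Prop :=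
  ∀ c, c ∈ interior P → ∃ N, ∀ n ≥ N, ∀ m ≥ N, ConeLt P (p (x n) (x m)) c

/-- `(X, p)` is cone-complete. -/
def ConeComplete (P : Set E) {X : Type*} (p : X → X → E) : Prop :=
  ∀ x : ℕ → X, ConeCauchy P p x → ∃ a, ConeConverges P p x a

/-- The nonlinear scalarization ξ_e(y) = inf {t : t • e - y ∈ P}. -/
noncomputable def xiScal (P : Set E) (e y : E) : ℝ := sInf {t : ℝ | t • e - y ∈ P}

/-- The open ball `B(x, c) = {y : p x y ≪ c}`. -/
def coneBall (P : Set E) {X : Type*} (p : X → X → E) (x : X) (c : E) : Set X :=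
  {y | ConeLt P (p x y) c}

/-- The cone metric topology `τ_p`, generated by the balls `B(x,c)`, `c ≫ 0`. -/
def coneTopology (P : Set E) {X : Type*} (p : X → X → E) : TopologicalSpace X :=
  TopologicalSpace.generateFrom {s | ∃ x c, c ∈ interior P ∧ s = coneBall P p x c}

end Defs

section Aux

variable {E : Type*} [AddCommGroup E] [Module ℝ E] [TopologicalSpace E]
    [IsTopologicalAddGroup E] [ContinuousSMul ℝ E]

/-- The scalarization set is nonempty. -/
lemma xiSet_nonempty (P : Set E) (hP : IsTVSCone P) (e : E) (he : e ∈ interior P) (y : E) :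
    {t : ℝ | t • e - y ∈ P}.Nonempty := by
  have hc : ContinuousAt (fun s : ℝ => e - s • y) 0 := by fun_prop
  have hmem0 : (fun s : ℝ => e - s • y) 0 ∈ interior P := by simpa using he
  have hev : ∀ᶠ s : ℝ in nhds 0, e - s • y ∈ interior P :=
    hc.eventually_mem (isOpen_interior.mem_nhds hmem0)
  have hev' : ∀ᶠ s : ℝ in nhdsWithin 0 (Set.Ioi 0),
      e - s • y ∈ interior P ∧ s ∈ Set.Ioi (0:ℝ) :=
    (hev.filter_mono nhdsWithin_le_nhds).and self_mem_nhdsWithin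
  obtain ⟨s, hsP, hs⟩ := hev'.exists
  refine ⟨s⁻¹, ?_⟩
  have : s⁻¹ • (e - s • y) ∈ P :=
    hP.smul_mem s⁻¹ (inv_pos.2 hs).le (interior_subset hsP)
  simpa [smul_sub, smul_smul, inv_mul_cancel₀ (ne_of_gt (show (0:ℝ) < s from hs))] using this

end Aux

theorem stmt_0' {E X : Type*} [AddCommGroup E] [Module ℝ E] [TopologicalSpace E]
    [IsTopologicalAddGroup E] [ContinuousSMul ℝ E] [T2Space E] [Nonempty X]
    (P : Set E) (hP : IsTVSCone P) (p : X → X → E) (hp : IsConeMetric P p)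
    (e : E) (he : e ∈ interior P) :
    (∀ x y : X, 0 ≤ xiScal P e (p x y)) ∧
    (∀ x y : X, xiScal P e (p x y) = 0 ↔ x = y) ∧
    (∀ x y : X, xiScal P e (p x y) = xiScal P e (p y x)) ∧
    (∀ x y z : X, xiScal P e (p x y) ≤ xiScal P e (p x z) + xiScal P e (p z y)) := by
  by_cases he0 : e = 0
  -- Degenerate case: `e = 0` forces `E` to be trivial.
  · have hall : ∀ z : E, z ∈ P := by
      intro z
      have hc : ContinuousAt (fun s : ℝ => s • z) 0 := by fun_prop
      have hmem0 : (fun s : ℝ => s • z) 0 ∈ interior P := by simpa [he0] using he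
      have hev : ∀ᶠ s : ℝ in nhds 0, s • z ∈ interior P :=
        hc.eventually_mem (isOpen_interior.mem_nhds hmem0)
      have hev' : ∀ᶠ s : ℝ in nhdsWithin 0 (Set.Ioi 0),
          s • z ∈ interior P ∧ s ∈ Set.Ioi (0:ℝ) :=
        (hev.filter_mono nhdsWithin_le_nhds).and self_mem_nhdsWithin
      obtain ⟨s, hsP, hs⟩ := hev'.exists
      have : s⁻¹ • (s • z) ∈ P :=
        hP.smul_mem s⁻¹ (inv_pos.2 hs).le (interior_subset hsP)
      simpa [smul_smul, inv_mul_cancel₀ (ne_of_gt (show (0:ℝ) < s from hs))] using this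
    have hzero : ∀ z : E, z = 0 := fun z => hP.pointed z (hall z) (hall (-z))
    have hxi : ∀ y : E, xiScal P e y = 0 := by
      intro y
      have : {t : ℝ | t • e - y ∈ P} = Set.univ := by
        ext t; simp [hall _]
      rw [xiScal, this]
      exact Real.sInf_of_not_bddBelow (by simp [not_bddBelow_iff, Set.mem_univ])
    refine ⟨fun x y => by simp [hxi], fun x y => ?_, fun x y => by simp [hxi],
      fun x y z => by simp [hxi]⟩
    simp only [hxi]
    exact iff_of_true trivial ((hp.eq_zero_iff x y).1 (hzero _))
  -- Main case: `e ≠ 0`.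
  · have heP : e ∈ P := interior_subset he
    -- lower bound `0` for the scalarization set of any element of `P`
    have hlb : ∀ y ∈ P, ∀ t ∈ {t : ℝ | t • e - y ∈ P}, (0:ℝ) ≤ t := by
      intro y hy t ht
      by_contra hlt
      push_neg at hlt
      have hte : t • e ∈ P := by
        have := hP.add_mem ht hy
        simpa using this
      have hnte : -(t • e) ∈ P := by
        have := hP.smul_mem (-t) (by linarith) heP
        simpa [neg_smul] using this
      have := hP.pointed _ hte hnte
      rcases smul_eq_zero.1 this with h | h
      · exact absurd h (ne_of_lt hlt)
      · exact he0 h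
    have hbdd : ∀ y ∈ P, BddBelow {t : ℝ | t • e - y ∈ P} :=
      fun y hy => ⟨0, fun t ht => hlb y hy t ht⟩
    -- the set is closed, so the infimum is attained
    have hmem : ∀ y ∈ P, (xiScal P e y) • e - y ∈ P := by
      intro y hy
      have hcl : IsClosed {t : ℝ | t • e - y ∈ P} := by
        have : Continuous fun t : ℝ => t • e - y := by fun_prop
        exact hP.isClosed.preimage this
      exact hcl.csInf_mem (xiSet_nonempty P hP e he y) (hbdd y hy)
    have hpxy : ∀ x y : X, p x y ∈ P := by
      intro x y; have := hp.nonneg x y; simpa [ConeLe] using this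
    have hnonneg : ∀ x y : X, 0 ≤ xiScal P e (p x y) := by
      intro x y
      exact le_csInf (xiSet_nonempty P hP e he _) (hlb _ (hpxy x y))
    refine ⟨hnonneg, ?_, ?_, ?_⟩
    · intro x y
      constructor
      · intro h
        have := hmem (p x y) (hpxy x y)
        rw [h, zero_smul, zero_sub] at this
        exact (hp.eq_zero_iff x y).1 (hP.pointed _ (hpxy x y) this)
      · intro h
        subst h
        have h0 : p x x = 0 := (hp.eq_zero_iff x x).2 rfl
        have hle : xiScal P e (p x x) ≤ 0 := by
          apply csInf_le (hbdd _ (hpxy x x))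
          show (0:ℝ) • e - p x x ∈ P
          simpa [h0] using hP.smul_mem 0 le_rfl heP
        exact le_antisymm hle (hnonneg x x)
    · intro x y; rw [hp.symm x y]
    · intro x y z
      apply csInf_le (hbdd _ (hpxy x y))
      have h1 := hmem (p x z) (hpxy x z)
      have h2 := hmem (p z y) (hpxy z y)
      have h3 : p x z + p z y - p x y ∈ P := hp.triangle x y z
      have := hP.add_mem (hP.add_mem h1 h2) h3
      have heq : xiScal P e (p x z) • e - p x z + (xiScal P e (p z y) • e - p z y)
          + (p x z + p z y - p x y)
          = (xiScal P e (p x z) + xiScal P e (p z y)) • e - p x y := by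
        rw [add_smul]; abel
      rw [heq] at this
      exact this

/-- `d_p = ξ_e ∘ p` is a metric on `X`. -/
theorem stmt_0 {E X : Type*} [AddCommGroup E] [Module ℝ E] [TopologicalSpace E]
    [IsTopologicalAddGroup E] [ContinuousSMul ℝ E] [T2Space E] [Nonempty X]
    (P : Set E) (hP : IsTVSCone P) (p : X → X → E) (hp : IsConeMetric P p)
    (e : E) (he : e ∈ interior P) :
    (∀ x y : X, 0 ≤ xiScal P e (p x y)) ∧
    (∀ x y : X, xiScal P e (p x y) = 0 ↔ x = y) ∧
    (∀ x y : X, xiScal P e (p x y) = xiScal P e (p y x)) ∧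
    (∀ x y z : X, xiScal P e (p x y) ≤ xiScal P e (p x z) + xiScal P e (p z y)) := by
  exact stmt_0' P hP p hp e he
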